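/- Let B be Lorentzian of signature (1, n−1) on V, let (e₀,…,e_{n−1}) be a pseudo-orthonormal basis, and let F be a p-form on V (1 ≤ p ≤ n−1) of type N with multiple null direction ℓ ≠ 0. Define S_F(x,y) := Σ_{a₁,…,a_{p−1}=0}^{n−1} ε_{a₁}⋯ε_{a_{p−1}} F(x, e_{a₁},…,e_{a_{p−1}}) F(y, e_{a₁},…,e_{a_{p−1}}). Then there exists a real number λ ≥ 0 such that S_F(x,y) = λ B(ℓ,x) B(ℓ,y) for all x, y ∈ V, and λ = 0 if and only if F = 0. (Hence the energy–momentum tensor (3.1) of a type N p-form takes the aligned pure-radiation form T(x,y) = (κ₀/8π) λ B(ℓ,x)B(ℓ,y), as in eqs. (3.2) and (B.8).) -/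

import Mathlib

open scoped BigOperators

/-- `ι_ℓ F = 0`: the interior product of the alternating form `F` with the vector `ℓ`
vanishes.  Since `F` is alternating, this is equivalent to saying that `F` vanishes
whenever one of its arguments equals `ℓ`. -/
def IotaZero {V : Type*} [AddCommGroup V] [Module ℝ V] {p : ℕ}
    (F : AlternatingMap ℝ V ℝ (Fin p)) (ℓ : V) : Prop :=
  ∀ v : Fin p → V, (∃ i, v i = ℓ) → F v = 0

/-- `ℓ♭ ∧ F = 0` with respect to the bilinear form `B`. -/
def WedgeFlatZero {V : Type*} [AddCommGroup V] [Module ℝ V] {p : ℕ}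
    (B : V →ₗ[ℝ] V →ₗ[ℝ] ℝ) (F : AlternatingMap ℝ V ℝ (Fin p)) (ℓ : V) : Prop :=
  ∀ v : Fin (p + 1) → V,
    ∑ i : Fin (p + 1), (-1 : ℝ) ^ (i : ℕ) * B ℓ (v i) * F (v ∘ i.succAbove) = 0

/-- `F` is of type N with multiple null direction `ℓ` (Definition 1.1). -/
def TypeN {V : Type*} [AddCommGroup V] [Module ℝ V] {p : ℕ}
    (B : V →ₗ[ℝ] V →ₗ[ℝ] ℝ) (F : AlternatingMap ℝ V ℝ (Fin p)) (ℓ : V) : Prop :=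
  IotaZero F ℓ ∧ WedgeFlatZero B F ℓ

/-- The signs `ε₀ = −1`, `ε_a = 1` for `a ≥ 1`. -/
def epsSign {n : ℕ} (a : Fin n) : ℝ := if (a : ℕ) = 0 then -1 else 1

/-- `e` is a pseudo-orthonormal basis for `B` of Lorentzian signature `(1, n−1)`. -/
def IsLorentzBasis {V : Type*} [AddCommGroup V] [Module ℝ V] {n : ℕ}
    (B : V →ₗ[ℝ] V →ₗ[ℝ] ℝ) (e : Module.Basis (Fin n) ℝ V) : Prop :=
  ∀ a b : Fin n, B (e a) (e b) = if a = b then epsSign a else 0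

section Aux
set_option linter.unusedSectionVars false

lemma epsSign_mul_self {n : ℕ} (a : Fin n) : epsSign a * epsSign a = 1 := by
  unfold epsSign; split <;> norm_num

variable {V : Type*} [AddCommGroup V] [Module ℝ V] {n : ℕ}
  {B : V →ₗ[ℝ] V →ₗ[ℝ] ℝ} {e : Module.Basis (Fin n) ℝ V}

lemma lorentz_apply_basis (he : IsLorentzBasis B e) (ℓ : V) (a : Fin n) :
    B ℓ (e a) = epsSign a * e.repr ℓ a := by
  conv_lhs => rw [← e.sum_repr ℓ]
  rw [map_sum, LinearMap.sum_apply]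
  simp only [map_smul, LinearMap.smul_apply, smul_eq_mul]
  rw [Finset.sum_congr rfl (fun b _ => ?_), Finset.sum_ite_eq' Finset.univ a
    (fun b => epsSign a * e.repr ℓ a)]
  · simp
  · rw [he b a]
    split
    · rename_i h; subst h; ring
    · exact mul_zero _

lemma lorentz_sum_repr (he : IsLorentzBasis B e) (ℓ : V) :
    ∑ c : Fin n, (epsSign c * B ℓ (e c)) • e c = ℓ := by
  conv_rhs => rw [← e.sum_repr ℓ]
  refine Finset.sum_congr rfl fun c _ => ?_
  rw [lorentz_apply_basis he, ← mul_assoc, epsSign_mul_self, one_mul]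

lemma lorentz_self (he : IsLorentzBasis B e) (ℓ : V) :
    B ℓ ℓ = ∑ a : Fin n, epsSign a * (e.repr ℓ a) ^ 2 := by
  calc B ℓ ℓ = B ℓ (∑ a : Fin n, e.repr ℓ a • e a) := by rw [e.sum_repr]
  _ = ∑ a : Fin n, e.repr ℓ a * B ℓ (e a) := by rw [map_sum]; simp
  _ = ∑ a : Fin n, epsSign a * (e.repr ℓ a) ^ 2 := by
      refine Finset.sum_congr rfl fun a _ => ?_
      rw [lorentz_apply_basis he]; ring

/-- The basic contraction lemma: contracting `F` with `ℓ` through the inverse metric in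
one slot gives zero. -/
lemma contract_update_zero {p : ℕ} {F : AlternatingMap ℝ V ℝ (Fin (p+1))} {ℓ : V}
    (he : IsLorentzBasis B e) (hio : IotaZero F ℓ)
    (M : Fin (p+1) → V) (s : Fin (p+1)) :
    ∑ c : Fin n, (epsSign c * B ℓ (e c)) * F (Function.update M s (e c)) = 0 := by
  have h1 : ∀ c : Fin n,
      (epsSign c * B ℓ (e c)) * F (Function.update M s (e c))
      = F (Function.update M s ((epsSign c * B ℓ (e c)) • e c)) := by
    intro c
    rw [AlternatingMap.map_update_smul, smul_eq_mul]
  rw [Finset.sum_congr rfl (fun c _ => h1 c),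
    ← F.map_update_sum Finset.univ s (fun c => (epsSign c * B ℓ (e c)) • e c) M,
    lorentz_sum_repr he]
  exact hio _ ⟨s, Function.update_self _ _ _⟩

lemma cons_comp_succ_succAbove {α : Type*} {m : ℕ} (x : α) (u : Fin (m+1) → α)
    (i : Fin (m+1)) :
    (Fin.cons x u : Fin (m+2) → α) ∘ (i.succ).succAbove = Fin.cons x (u ∘ i.succAbove) := by
  funext k
  cases k using Fin.cases with
  | zero => simp
  | succ k => simp [Fin.succ_succAbove_succ]

lemma comp_insertNth {α β : Type*} {m : ℕ} (g : α → β) (j : Fin (m+1)) (c : α)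
    (b : Fin m → α) :
    (fun i => g (Fin.insertNth (α := fun _ => α) j c b i))
      = Fin.insertNth (α := fun _ => β) j (g c) (fun i => g (b i)) := by
  funext i
  refine Fin.succAboveCases j ?_ (fun k => ?_) i <;> simp

lemma cons_insertNth_eq_update {m : ℕ} (z w : V) (gb : Fin m → V) (j : Fin (m+1)) :
    (Fin.cons z (j.insertNth w gb) : Fin (m+2) → V)
      = Function.update (Fin.cons z (j.insertNth (0:V) gb)) j.succ w := by
  funext k
  cases k using Fin.cases with
  | zero => rw [Function.update_of_ne (Fin.succ_ne_zero j).symm]; simp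
  | succ k =>
    by_cases hk : k = j
    · subst hk; simp
    · rw [Function.update_of_ne (by simpa using hk)]
      obtain ⟨i, rfl⟩ := Fin.exists_succAbove_eq hk
      simp

end Aux

/-- The contracted square of `F`. -/
noncomputable def Ssum {V : Type*} [AddCommGroup V] [Module ℝ V] {n p : ℕ}
    (e : Module.Basis (Fin n) ℝ V) (F : AlternatingMap ℝ V ℝ (Fin (p+1))) (x y : V) : ℝ :=
  ∑ a : Fin p → Fin n, (∏ i : Fin p, epsSign (a i)) *
    (F (Fin.cons x (fun i => e (a i))) * F (Fin.cons y (fun i => e (a i))))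

section Aux2
set_option linter.unusedSectionVars false
set_option maxHeartbeats 1000000
variable {V : Type*} [AddCommGroup V] [Module ℝ V] {n : ℕ}
  {B : V →ₗ[ℝ] V →ₗ[ℝ] ℝ} {e : Module.Basis (Fin n) ℝ V}

lemma Ssum_symm {p : ℕ} (F : AlternatingMap ℝ V ℝ (Fin (p+1))) (x y : V) :
    Ssum e F x y = Ssum e F y x :=
  Finset.sum_congr rfl fun a _ => by ring

lemma cons_comp_succ {α : Type*} {m : ℕ} (x : α) (u : Fin m → α) :
    (Fin.cons x u : Fin (m+1) → α) ∘ Fin.succ = u := by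
  funext i; simp [Function.comp_def]

lemma contract_sum_zero {m : ℕ} {F : AlternatingMap ℝ V ℝ (Fin (m+2))} {ℓ : V}
    (he : IsLorentzBasis B e) (hio : IotaZero F ℓ)
    (x y z : V) (j : Fin (m+1)) :
    ∑ a : Fin (m+1) → Fin n, ((∏ i : Fin (m+1), epsSign (a i)) * B ℓ (e (a j))) *
      (F (Fin.cons x (Fin.cons y (fun i => e (a (j.succAbove i))))) *
       F (Fin.cons z (fun i => e (a i)))) = 0 := by
  rw [← Equiv.sum_comp (Fin.insertNthEquiv (fun _ => Fin n) j)]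
  rw [Fintype.sum_prod_type_right]
  refine Finset.sum_eq_zero fun b _ => ?_
  have hF : ∀ c : Fin n, F (Fin.cons z (fun i => e (Fin.insertNth (α := fun _ => Fin n) j c b i)))
      = F (Function.update
          (Fin.cons z (j.insertNth (0:V) (fun i => e (b i)))) j.succ (e c)) := by
    intro c
    rw [comp_insertNth e j c b, cons_insertNth_eq_update]
  have hprod : ∀ c : Fin n, (∏ i, epsSign (Fin.insertNth (α := fun _ => Fin n) j c b i))
      = epsSign c * ∏ i, epsSign (b i) := by
    intro c
    rw [Fin.prod_univ_succAbove (fun i => epsSign (Fin.insertNth (α := fun _ => Fin n) j c b i)) j]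
    simp
  have hcontr := contract_update_zero (F := F) he hio
    (Fin.cons z (j.insertNth (0:V) (fun i => e (b i)))) j.succ
  calc ∑ c : Fin n, ((∏ i, epsSign ((Fin.insertNthEquiv (fun _ => Fin n) j) (c, b) i)) *
          B ℓ (e ((Fin.insertNthEquiv (fun _ => Fin n) j) (c, b) j))) *
        (F (Fin.cons x (Fin.cons y
            (fun i => e ((Fin.insertNthEquiv (fun _ => Fin n) j) (c, b) (j.succAbove i))))) *
         F (Fin.cons z (fun i => e ((Fin.insertNthEquiv (fun _ => Fin n) j) (c, b) i))))
      = ((∏ i, epsSign (b i)) *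
          F (Fin.cons x (Fin.cons y (fun i => e (b i))))) *
        ∑ c : Fin n, (epsSign c * B ℓ (e c)) *
          F (Function.update
            (Fin.cons z (j.insertNth (0:V) (fun i => e (b i)))) j.succ (e c)) := by
        rw [Finset.mul_sum]
        refine Finset.sum_congr rfl fun c _ => ?_
        simp only [Fin.insertNthEquiv_apply, Fin.insertNth_apply_same,
          Fin.insertNth_apply_succAbove]
        rw [hF c, hprod c]
        ring
    _ = 0 := by rw [hcontr, mul_zero]

lemma key_identity_succ {m : ℕ} {F : AlternatingMap ℝ V ℝ (Fin (m+2))} {ℓ : V}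
    (he : IsLorentzBasis B e) (hio : IotaZero F ℓ) (hwf : WedgeFlatZero B F ℓ)
    (x y z : V) :
    B ℓ x * Ssum e F z y = B ℓ y * Ssum e F z x := by
  have hper : ∀ a : Fin (m+1) → Fin n,
      B ℓ x * F (Fin.cons y (fun i => e (a i)))
      - B ℓ y * F (Fin.cons x (fun i => e (a i)))
      + ∑ j : Fin (m+1), (-1:ℝ)^(j:ℕ) * B ℓ (e (a j)) *
          F (Fin.cons x (Fin.cons y (fun i => e (a (j.succAbove i))))) = 0 := by
    intro a
    have h := hwf (Fin.cons x (Fin.cons y (fun i => e (a i))))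
    rw [Fin.sum_univ_succ, Fin.sum_univ_succ] at h
    simp only [cons_comp_succ_succAbove, Fin.succAbove_zero, cons_comp_succ,
      Fin.cons_zero, Fin.cons_succ, Fin.val_zero, Fin.val_succ, pow_zero, one_mul,
      pow_succ] at h
    simp only [Function.comp_def] at h
    have hs : ∑ j : Fin (m+1), (-1:ℝ)^(j:ℕ) * (-1) * (-1) * B ℓ (e (a j)) *
          F (Fin.cons x (Fin.cons y (fun i => e (a (j.succAbove i)))))
        = ∑ j : Fin (m+1), (-1:ℝ)^(j:ℕ) * B ℓ (e (a j)) *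
          F (Fin.cons x (Fin.cons y (fun i => e (a (j.succAbove i))))) :=
      Finset.sum_congr rfl fun j _ => by ring
    rw [hs] at h
    linear_combination h
  have h2 : ∑ a : Fin (m+1) → Fin n,
      (B ℓ x * ((∏ i, epsSign (a i)) *
          (F (Fin.cons z (fun i => e (a i))) * F (Fin.cons y (fun i => e (a i)))))
       - B ℓ y * ((∏ i, epsSign (a i)) *
          (F (Fin.cons z (fun i => e (a i))) * F (Fin.cons x (fun i => e (a i)))))
       + ∑ j : Fin (m+1), (-1:ℝ)^(j:ℕ) *
            (((∏ i, epsSign (a i)) * B ℓ (e (a j))) *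
              (F (Fin.cons x (Fin.cons y (fun i => e (a (j.succAbove i))))) *
               F (Fin.cons z (fun i => e (a i)))))) = 0 := by
    refine Finset.sum_eq_zero fun a _ => ?_
    have hm : (B ℓ x * ((∏ i, epsSign (a i)) *
          (F (Fin.cons z (fun i => e (a i))) * F (Fin.cons y (fun i => e (a i)))))
       - B ℓ y * ((∏ i, epsSign (a i)) *
          (F (Fin.cons z (fun i => e (a i))) * F (Fin.cons x (fun i => e (a i)))))
       + ∑ j : Fin (m+1), (-1:ℝ)^(j:ℕ) *
            (((∏ i, epsSign (a i)) * B ℓ (e (a j))) *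
              (F (Fin.cons x (Fin.cons y (fun i => e (a (j.succAbove i))))) *
               F (Fin.cons z (fun i => e (a i))))))
        = ((∏ i, epsSign (a i)) * F (Fin.cons z (fun i => e (a i)))) *
          (B ℓ x * F (Fin.cons y (fun i => e (a i)))
           - B ℓ y * F (Fin.cons x (fun i => e (a i)))
           + ∑ j : Fin (m+1), (-1:ℝ)^(j:ℕ) * B ℓ (e (a j)) *
               F (Fin.cons x (Fin.cons y (fun i => e (a (j.succAbove i)))))) := by
      rw [mul_add, mul_sub, Finset.mul_sum]
      congr 1
      · congr 1 <;> ring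
      · exact Finset.sum_congr rfl fun j _ => by ring
    rw [hm, hper a, mul_zero]
  rw [Finset.sum_add_distrib, Finset.sum_sub_distrib, ← Finset.mul_sum, ← Finset.mul_sum] at h2
  have h3 : ∑ a : Fin (m+1) → Fin n, ∑ j : Fin (m+1), (-1:ℝ)^(j:ℕ) *
            (((∏ i, epsSign (a i)) * B ℓ (e (a j))) *
              (F (Fin.cons x (Fin.cons y (fun i => e (a (j.succAbove i))))) *
               F (Fin.cons z (fun i => e (a i))))) = 0 := by
    rw [Finset.sum_comm]
    refine Finset.sum_eq_zero fun j _ => ?_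
    rw [← Finset.mul_sum, contract_sum_zero he hio x y z j, mul_zero]
  unfold Ssum
  linear_combination h2 - h3

lemma key_identity_zero {F : AlternatingMap ℝ V ℝ (Fin 1)} {ℓ : V}
    (he : IsLorentzBasis B e) (hio : IotaZero F ℓ) (hwf : WedgeFlatZero B F ℓ)
    (x y z : V) :
    B ℓ x * Ssum e F z y = B ℓ y * Ssum e F z x := by
  have hper : ∀ a : Fin 0 → Fin n,
      B ℓ x * F (Fin.cons y (fun i => e (a i)))
      = B ℓ y * F (Fin.cons x (fun i => e (a i))) := by
    intro a
    have h := hwf (Fin.cons x (Fin.cons y (fun i => e (a i))))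
    rw [Fin.sum_univ_succ, Fin.sum_univ_succ] at h
    simp only [cons_comp_succ_succAbove, Fin.succAbove_zero, cons_comp_succ,
      Fin.cons_zero, Fin.cons_succ, Fin.val_zero, Fin.val_succ, pow_zero, one_mul,
      pow_succ, Finset.univ_eq_empty, Finset.sum_empty, add_zero] at h
    linarith
  unfold Ssum
  rw [Finset.mul_sum, Finset.mul_sum]
  refine Finset.sum_congr rfl fun a _ => ?_
  linear_combination ((∏ i : Fin 0, epsSign (a i)) *
    F (Fin.cons z (fun i => e (a i)))) * hper a

lemma key_identity {p : ℕ} {F : AlternatingMap ℝ V ℝ (Fin (p+1))} {ℓ : V}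
    (he : IsLorentzBasis B e) (hio : IotaZero F ℓ) (hwf : WedgeFlatZero B F ℓ)
    (x y z : V) :
    B ℓ x * Ssum e F z y = B ℓ y * Ssum e F z x := by
  cases p with
  | zero => exact key_identity_zero he hio hwf x y z
  | succ m => exact key_identity_succ he hio hwf x y z

lemma bll_eq_zero {p : ℕ} {F : AlternatingMap ℝ V ℝ (Fin (p+1))} {ℓ : V}
    (hio : IotaZero F ℓ) (hwf : WedgeFlatZero B F ℓ)
    {v0 : Fin (p+1) → V} (hv : F v0 ≠ 0) : B ℓ ℓ = 0 := by
  have h := hwf (Fin.cons ℓ v0)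
  rw [Fin.sum_univ_succ] at h
  have hz : ∀ i : Fin (p+1),
      (-1:ℝ)^(((Fin.succ i) : Fin (p+2)):ℕ) *
          B ℓ ((Fin.cons ℓ v0 : Fin (p+2) → V) (Fin.succ i)) *
        F ((Fin.cons ℓ v0 : Fin (p+2) → V) ∘ (Fin.succ i).succAbove) = 0 := by
    intro i
    rw [hio ((Fin.cons ℓ v0 : Fin (p+2) → V) ∘ (Fin.succ i).succAbove)
      ⟨0, by simp [Function.comp_def]⟩, mul_zero]
  rw [Finset.sum_congr rfl (fun i _ => hz i), Finset.sum_const_zero, add_zero] at h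
  simp only [Fin.cons_zero, Fin.val_zero, pow_zero, one_mul, Fin.succAbove_zero,
    cons_comp_succ] at h
  exact (mul_eq_zero.mp h).resolve_right hv

end Aux2


/-- for a type N `(p+1)`-form `F` (i.e. a `p`-form with `p ≥ 1`, written
here with arity `p + 1`, `p + 1 ≤ n − 1`), the once-contracted square
`S_F(x,y) = Σ ε_{a₁}⋯ε_{a_p} F(x, e_{a₁},…,e_{a_p}) F(y, e_{a₁},…,e_{a_p})`
equals `λ B(ℓ,x) B(ℓ,y)` for some `λ ≥ 0`, with `λ = 0` iff `F = 0`
(aligned pure-radiation energy–momentum, eqs. (3.1), (3.2), (B.8)). -/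
theorem typeN_energy_momentum_pure_radiation {V : Type*} [AddCommGroup V] [Module ℝ V]
    [FiniteDimensional ℝ V] {n : ℕ}
    (B : V →ₗ[ℝ] V →ₗ[ℝ] ℝ)
    (e : Module.Basis (Fin n) ℝ V) (he : IsLorentzBasis B e)
    {p : ℕ} (hpn : p + 1 ≤ n - 1)
    (F : AlternatingMap ℝ V ℝ (Fin (p + 1)))
    {ℓ : V} (hℓ : ℓ ≠ 0) (hN : TypeN B F ℓ) :
    ∃ lam : ℝ, 0 ≤ lam ∧
      (∀ x y : V,
        ∑ a : Fin p → Fin n, (∏ i : Fin p, epsSign (a i)) *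
          (F (Fin.cons x (fun i => e (a i))) * F (Fin.cons y (fun i => e (a i)))) =
        lam * (B ℓ x * B ℓ y)) ∧
      (lam = 0 ↔ F = 0) := by
  classical
  by_cases hF0 : F = 0
  · refine ⟨0, le_refl 0, fun x y => ?_, by simp [hF0]⟩
    simp [hF0]
  · obtain ⟨hio, hwf⟩ := hN
    obtain ⟨v0, hv0⟩ : ∃ v, F v ≠ 0 := by
      by_contra hc; push_neg at hc; exact hF0 (AlternatingMap.ext hc)
    have hnull : B ℓ ℓ = 0 := bll_eq_zero hio hwf hv0
    have hn : 0 < n := by omega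
    set a0 : Fin n := ⟨0, hn⟩ with ha0
    have hr0 : e.repr ℓ a0 ≠ 0 := by
      intro h0
      apply hℓ
      have hcongr : ∀ a : Fin n, epsSign a * (e.repr ℓ a)^2 = (e.repr ℓ a)^2 := by
        intro a
        by_cases ha : (a : ℕ) = 0
        · have haa : a = a0 := Fin.ext ha
          rw [haa, h0]; ring
        · simp [epsSign, ha]
      have hsum2 : ∑ a : Fin n, (e.repr ℓ a)^2 = 0 := by
        rw [← Finset.sum_congr rfl fun a _ => hcongr a, ← lorentz_self he, hnull]
      have hall : ∀ a : Fin n, e.repr ℓ a = 0 := by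
        intro a
        have h2 := (Finset.sum_eq_zero_iff_of_nonneg
          (fun a _ => sq_nonneg (e.repr ℓ a))).mp hsum2 a (Finset.mem_univ a)
        exact pow_eq_zero_iff two_ne_zero |>.mp h2
      calc ℓ = ∑ a : Fin n, e.repr ℓ a • e a := (e.sum_repr ℓ).symm
        _ = 0 := by simp [hall]
    have hl0 : B ℓ (e a0) ≠ 0 := by
      rw [lorentz_apply_basis he]
      have heps : epsSign a0 = -1 := by simp [epsSign, ha0]
      rw [heps]
      simpa using hr0
    have hG : ∀ x y z : V, B ℓ x * Ssum e F z y = B ℓ y * Ssum e F z x :=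
      fun x y z => key_identity he hio hwf x y z
    set lam : ℝ := Ssum e F (e a0) (e a0) / (B ℓ (e a0))^2 with hlam
    have hSe0 : ∀ x y : V, Ssum e F x y = lam * (B ℓ x * B ℓ y) := by
      intro x y
      have h1 := hG (e a0) y x
      have h2 := hG (e a0) x (e a0)
      have h3 := Ssum_symm (e := e) F x (e a0)
      rw [hlam, div_mul_eq_mul_div, eq_div_iff (pow_ne_zero 2 hl0)]
      linear_combination (B ℓ (e a0)) * h1 + (B ℓ y) * (B ℓ (e a0)) * h3
        + (B ℓ y) * h2
    have hterm : ∀ a : Fin p → Fin n, (¬ ∃ i, a i = a0) →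
        (∏ i : Fin p, epsSign (a i)) = 1 := by
      intro a hc
      push_neg at hc
      refine Finset.prod_eq_one fun i _ => ?_
      have hv : ((a i : ℕ)) ≠ 0 := fun h => hc i (Fin.ext h)
      simp [epsSign, hv]
    have hrep : ∀ a : Fin p → Fin n, (∃ i, a i = a0) →
        F (Fin.cons (e a0) (fun k => e (a k))) = 0 := by
      intro a ⟨i, hi⟩
      refine F.map_eq_zero_of_eq _ (i := (0 : Fin (p+1))) (j := i.succ) ?_
        (Fin.succ_ne_zero i).symm
      simp [hi]
    have htermnn : ∀ a : Fin p → Fin n, a ∈ Finset.univ → 0 ≤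
        (∏ i : Fin p, epsSign (a i)) *
          (F (Fin.cons (e a0) (fun i => e (a i))) *
           F (Fin.cons (e a0) (fun i => e (a i)))) := by
      intro a _
      by_cases hc : ∃ i, a i = a0
      · rw [hrep a hc]; simp
      · rw [hterm a hc, one_mul]
        exact mul_self_nonneg _
    have hS00 : 0 ≤ Ssum e F (e a0) (e a0) := Finset.sum_nonneg htermnn
    refine ⟨lam, div_nonneg hS00 (sq_nonneg _), fun x y => hSe0 x y, ?_, ?_⟩
    · intro hlam0
      have hS00' : Ssum e F (e a0) (e a0) = 0 := by
        rw [hSe0 (e a0) (e a0), hlam0, zero_mul]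
      have hFa : ∀ g : Fin p → Fin n, F (Fin.cons (e a0) (fun i => e (g i))) = 0 := by
        intro g
        by_cases hc : ∃ i, g i = a0
        · exact hrep g hc
        · have h2 := (Finset.sum_eq_zero_iff_of_nonneg htermnn).mp hS00' g
            (Finset.mem_univ g)
          rw [hterm g hc, one_mul] at h2
          exact mul_self_eq_zero.mp h2
      have hFb : ∀ b : Fin (p+1) → Fin n, F (fun i => e (b i)) = 0 := by
        intro b
        have h := hwf (Fin.cons (e a0) (fun i => e (b i)))
        rw [Fin.sum_univ_succ] at h
        have hz : ∀ i : Fin (p+1),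
            (-1:ℝ)^(((Fin.succ i) : Fin (p+2)):ℕ) *
              B ℓ ((Fin.cons (e a0) (fun k => e (b k)) : Fin (p+2) → V) (Fin.succ i)) *
              F ((Fin.cons (e a0) (fun k => e (b k)) : Fin (p+2) → V)
                  ∘ (Fin.succ i).succAbove) = 0 := by
          intro i
          have hcc : (Fin.cons (e a0) (fun k => e (b k)) : Fin (p+2) → V)
              ∘ (Fin.succ i).succAbove
              = Fin.cons (e a0) (fun k => e (b (i.succAbove k))) := by
            rw [cons_comp_succ_succAbove]
            simp [Function.comp_def]
          rw [hcc, hFa (fun k => b (i.succAbove k)), mul_zero]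
        rw [Finset.sum_congr rfl (fun i _ => hz i), Finset.sum_const_zero, add_zero] at h
        simp only [Fin.cons_zero, Fin.val_zero, pow_zero, one_mul, Fin.succAbove_zero,
          cons_comp_succ] at h
        exact (mul_eq_zero.mp h).resolve_left hl0
      refine Module.Basis.ext_alternating e fun v _ => ?_
      rw [hFb v]
      simp
    · intro h; exact absurd h hF0
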